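/- Let V be a real inner product space of dimension 3, let N be a unit vector, T a unit vector, and let E1, E2 be a basis of a 2-dimensional subspace P orthogonal to N. Set v := ⟨T,E1⟩E2 − ⟨T,E2⟩E1 and let G(E1,E2) := ⟨E1,E1⟩⟨E2,E2⟩ − ⟨E1,E2⟩² be the Gram determinant. Then the norm of the projection of N onto the orthogonal complement of T satisfies |N − ⟨N,T⟩T| = |v| / G(E1,E2)^{1/2}. -/

import Mathlib

open scoped RealInnerProductSpace

/-- Horizontal Jacobian lemma (Lemma 3.2): in a 3-dimensional real inner product
space, with `N` a unit vector orthogonal to the plane spanned by `E1, E2`, and `T`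
a unit vector, the norm of the projection of `N` orthogonal to `T` equals
`|⟨T,E1⟩E2 − ⟨T,E2⟩E1| / √G(E1,E2)`. -/
theorem horizontal_jacobian {V : Type*} [NormedAddCommGroup V] [InnerProductSpace ℝ V]
    (hdim : Module.finrank ℝ V = 3)
    (N T E1 E2 : V) (hN : ‖N‖ = 1) (hT : ‖T‖ = 1)
    (hind : LinearIndependent ℝ ![E1, E2])
    (h1 : ⟪N, E1⟫ = 0) (h2 : ⟪N, E2⟫ = 0) :
    ‖N - ⟪N, T⟫ • T‖ =
      ‖⟪T, E1⟫ • E2 - ⟪T, E2⟫ • E1‖ /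
        Real.sqrt (⟪E1, E1⟫ * ⟪E2, E2⟫ - ⟪E1, E2⟫ ^ 2) := by
  have hfd : FiniteDimensional ℝ V := FiniteDimensional.of_finrank_pos (by omega)
  have hpair : ∀ a b : ℝ, a • E1 + b • E2 = 0 → a = 0 ∧ b = 0 :=
    LinearIndependent.pair_iff.mp hind
  have hE2 : E2 ≠ 0 := by
    intro h; exact one_ne_zero ((hpair 0 1 (by simp [h])).2)
  have hN0 : N ≠ 0 := by intro h; rw [h] at hN; simp at hN
  have h1' : ⟪E1, N⟫ = 0 := by rw [real_inner_comm]; exact h1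
  have h2' : ⟪E2, N⟫ = 0 := by rw [real_inner_comm]; exact h2
  have hNN : ⟪N, N⟫ = 1 := by rw [real_inner_self_eq_norm_sq, hN]; norm_num
  have hg : ⟪E2, E1⟫ = ⟪E1, E2⟫ := real_inner_comm E1 E2
  -- Gram determinant positivity
  have hlt1 : ⟪E1, E2⟫ < ‖E1‖ * ‖E2‖ := by
    refine inner_lt_norm_mul_iff_real.mpr fun h => ?_
    have := hpair ‖E2‖ (-‖E1‖) (by rw [neg_smul, ← h]; abel)
    exact (norm_ne_zero_iff.mpr hE2) this.1
  have hlt2 : -⟪E1, E2⟫ < ‖E1‖ * ‖E2‖ := by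
    have h' : ⟪E1, -E2⟫ < ‖E1‖ * ‖-E2‖ := by
      refine inner_lt_norm_mul_iff_real.mpr fun h => ?_
      rw [norm_neg, smul_neg] at h
      have := hpair ‖E2‖ ‖E1‖ (by rw [h]; abel)
      exact (norm_ne_zero_iff.mpr hE2) this.1
    rwa [inner_neg_right, norm_neg] at h'
  have hG : 0 < ⟪E1, E1⟫ * ⟪E2, E2⟫ - ⟪E1, E2⟫ ^ 2 := by
    have hsq : ⟪E1, E2⟫ ^ 2 < (‖E1‖ * ‖E2‖) ^ 2 := sq_lt_sq' (by linarith) hlt1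
    have e1 : ⟪E1, E1⟫ = ‖E1‖ ^ 2 := real_inner_self_eq_norm_sq E1
    have e2 : ⟪E2, E2⟫ = ‖E2‖ ^ 2 := real_inner_self_eq_norm_sq E2
    rw [e1, e2]; nlinarith
  -- decomposition of T
  set c : ℝ := ⟪N, T⟫ with hc
  have hK : Submodule.span ℝ {E1, E2} = (ℝ ∙ N)ᗮ := by
    apply Submodule.eq_of_le_of_finrank_eq
    · rw [Submodule.span_le]
      rintro x (rfl | rfl) <;>
        simp [Submodule.mem_orthogonal_singleton_iff_inner_left, Set.pair_comm, h1', h2']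
    · have h2le : Module.finrank ℝ (Submodule.span ℝ {E1, E2}) = 2 := by
        rw [(Matrix.range_cons_cons_empty E1 E2 ![]).symm]
        simpa using finrank_span_eq_card (R := ℝ) hind
      have hone : Module.finrank ℝ (ℝ ∙ N) = 1 := finrank_span_singleton hN0
      have := Submodule.finrank_add_finrank_orthogonal (𝕜 := ℝ) (ℝ ∙ N)
      omega
  have hmem : T - c • N ∈ Submodule.span ℝ {E1, E2} := by
    rw [hK, Submodule.mem_orthogonal_singleton_iff_inner_left]
    rw [real_inner_comm]
    simp [inner_sub_right, inner_smul_right, hNN, hN, hc]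
  obtain ⟨a, b, hab⟩ := Submodule.mem_span_pair.mp hmem
  have hTdec : T = a • E1 + b • E2 + c • N := by rw [hab]; abel
  have ht1 : ⟪T, E1⟫ = a * ⟪E1, E1⟫ + b * ⟪E1, E2⟫ := by
    rw [hTdec]
    simp [inner_add_left, inner_smul_left, h1, hg]
  have ht2 : ⟪T, E2⟫ = a * ⟪E1, E2⟫ + b * ⟪E2, E2⟫ := by
    rw [hTdec]
    simp [inner_add_left, inner_smul_left, h2, hg]
  have hnormT : a^2*⟪E1,E1⟫ + 2*a*b*⟪E1,E2⟫ + b^2*⟪E2,E2⟫ + c^2 = 1 := by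
    have hTT : ⟪T, T⟫ = 1 := by rw [real_inner_self_eq_norm_sq, hT]; norm_num
    rw [hTdec] at hTT
    simp only [inner_add_left, inner_add_right, inner_smul_left, inner_smul_right,
      h1, h2, h1', h2', hNN, hg, conj_trivial] at hTT
    nlinarith [hTT]
  have hcN : ⟪N, c • T⟫ = c^2 := by rw [real_inner_smul_right, ← hc, sq]
  have hLsq : ‖N - c • T‖^2 = 1 - c^2 := by
    rw [norm_sub_sq_real, hcN, norm_smul, hN, hT, Real.norm_eq_abs]
    rw [mul_one, sq_abs]; ring
  have hvsq : ‖⟪T, E1⟫ • E2 - ⟪T, E2⟫ • E1‖^2 =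
      (⟪E1,E1⟫ * ⟪E2,E2⟫ - ⟪E1,E2⟫^2) * (a^2*⟪E1,E1⟫ + 2*a*b*⟪E1,E2⟫ + b^2*⟪E2,E2⟫) := by
    rw [norm_sub_sq_real, inner_smul_left, inner_smul_right, norm_smul, norm_smul]
    simp only [Real.norm_eq_abs, mul_pow, sq_abs, conj_trivial]
    rw [← real_inner_self_eq_norm_sq, ← real_inner_self_eq_norm_sq, ht1, ht2, hg]
    ring
  have hsnn : 0 ≤ 1 - c^2 := by rw [← hLsq]; positivity
  have hL : ‖N - c • T‖ = Real.sqrt (1 - c^2) := by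
    rw [← hLsq, Real.sqrt_sq (norm_nonneg _)]
  have hv : ‖⟪T, E1⟫ • E2 - ⟪T, E2⟫ • E1‖ =
      Real.sqrt ((⟪E1,E1⟫ * ⟪E2,E2⟫ - ⟪E1,E2⟫^2) * (1 - c^2)) := by
    have he : (⟪E1,E1⟫ * ⟪E2,E2⟫ - ⟪E1,E2⟫^2) * (1 - c^2) =
        ‖⟪T, E1⟫ • E2 - ⟪T, E2⟫ • E1‖^2 := by
      rw [hvsq]
      linear_combination (-(⟪E1,E1⟫*⟪E2,E2⟫-⟪E1,E2⟫^2)) * hnormT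
    rw [he, Real.sqrt_sq (norm_nonneg _)]
  rw [hL, hv, Real.sqrt_mul hG.le, mul_comm, mul_div_assoc,
    div_self (Real.sqrt_pos.mpr hG).ne', mul_one]
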